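/- For every ε > 0 there exists N such that for all n ≥ N and every Hamming ball B ⊆ {0,1}^n of radius r with 0 ≤ r ≤ n/2 (B = {x : d(x, x₀) ≤ r} for some center x₀), one has |∂*B| ≤ 4n · (1/2 − √(H⁻¹(log|B|/n)·(1 − H⁻¹(log|B|/n))) + ε) · |B|/2^n. -/

import Mathlib

set_option maxHeartbeats 1600000

/-- Expectation of `g` over the uniform measure on the Hamming cube `{0,1}^n`. -/
noncomputable def cubeE (n : ℕ) (g : (Fin n → Bool) → ℝ) : ℝ :=
  (∑ x : Fin n → Bool, g x) / 2 ^ n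

/-- `E_x ∑_{y ∼ x} (f x - f y)^2` on the Hamming cube `{0,1}^n`. -/
noncomputable def cubeD2 (n : ℕ) (f : (Fin n → Bool) → ℝ) : ℝ :=
  cubeE n (fun x => ∑ i : Fin n, (f x - f (Function.update x i (!x i))) ^ 2)

/-- `Ent(f²) = E[f² log f²] - E[f²] log E[f²]` (note `Real.log 0 = 0`). -/
noncomputable def cubeEnt (n : ℕ) (f : (Fin n → Bool) → ℝ) : ℝ :=
  cubeE n (fun x => f x ^ 2 * Real.log (f x ^ 2)) -
    cubeE n (fun x => f x ^ 2) * Real.log (cubeE n (fun x => f x ^ 2))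

/-- The fractional edge-boundary size of `A ⊆ {0,1}^n`:
`|∂*A| = inf { E_x ∑_{y∼x} (f x − f y)² : supp f ⊆ A, E[f²] = |A|/2^n }`. -/
noncomputable def fracBoundary (n : ℕ) (A : Finset (Fin n → Bool)) : ℝ :=
  sInf {v : ℝ | ∃ f : (Fin n → Bool) → ℝ,
    (∀ x, x ∉ A → f x = 0) ∧
    cubeE n (fun x => f x ^ 2) = (A.card : ℝ) / 2 ^ n ∧
    v = cubeD2 n f}


open Finset Real

variable {n : ℕ}

lemma card_sphere (n : ℕ) (x₀ : Fin n → Bool) (k : ℕ) :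
    (Finset.univ.filter fun x : Fin n → Bool => hammingDist x x₀ = k).card = n.choose k := by
  have hpc : (Finset.powersetCard k (Finset.univ : Finset (Fin n))).card = n.choose k := by
    rw [Finset.card_powersetCard, Finset.card_univ, Fintype.card_fin]
  rw [← hpc]
  apply Finset.card_bij' (fun x _ => Finset.univ.filter fun j => x j ≠ x₀ j)
    (fun s _ => fun j => if j ∈ s then !(x₀ j) else x₀ j)
  · intro x hx
    simp only [Finset.mem_filter, Finset.mem_univ, true_and] at hx
    simp [Finset.mem_powersetCard_univ, ← hx, hammingDist]
  · intro s hs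
    simp only [Finset.mem_powersetCard_univ] at hs
    simp only [Finset.mem_filter, Finset.mem_univ, true_and, hammingDist]
    rw [← hs]
    congr 1
    ext j
    by_cases hj : j ∈ s <;> simp [hj]
  · intro x hx
    funext j
    by_cases hj : x j = x₀ j <;> simp [hj]
    cases h0 : x₀ j <;> cases h1 : x j <;> simp_all
  · intro s hs
    ext j
    by_cases hj : j ∈ s <;> simp [hj]

lemma sum_shell (x₀ : Fin n → Bool) (F : ℕ → ℝ) :
    ∑ x : Fin n → Bool, F (hammingDist x x₀) =
      ∑ k ∈ Finset.range (n + 1), (n.choose k : ℝ) * F k := by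
  rw [← Finset.sum_fiberwise_of_maps_to' (g := fun x : Fin n → Bool => hammingDist x x₀)
      (t := Finset.range (n + 1))
      (fun x _ => Finset.mem_range.2 (Nat.lt_succ_of_le
        (by simpa using hammingDist_le_card_fintype (x := x) (y := x₀)))) F]
  refine Finset.sum_congr rfl fun k _ => ?_
  rw [Finset.sum_const, card_sphere n x₀ k, nsmul_eq_mul]

lemma dist_update_eq (x x₀ : Fin n → Bool) (i : Fin n) (h : x i = x₀ i) :
    hammingDist (Function.update x i (!x i)) x₀ = hammingDist x x₀ + 1 := by
  have hfi : (Finset.univ.filter fun j => Function.update x i (!x i) j ≠ x₀ j)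
      = insert i (Finset.univ.filter fun j => x j ≠ x₀ j) := by
    ext j
    simp only [Finset.mem_filter, Finset.mem_univ, true_and, Finset.mem_insert]
    rcases eq_or_ne j i with rfl | hj
    · simp [h]
    · simp [Function.update_of_ne hj, hj]
  show (Finset.univ.filter fun j => Function.update x i (!x i) j ≠ x₀ j).card = _
  rw [hfi, Finset.card_insert_of_notMem (by simp [h])]
  rfl

lemma dist_update_ne (x x₀ : Fin n → Bool) (i : Fin n) (h : x i ≠ x₀ i) :
    hammingDist (Function.update x i (!x i)) x₀ = hammingDist x x₀ - 1 := by
  have hfi : (Finset.univ.filter fun j => Function.update x i (!x i) j ≠ x₀ j)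
      = (Finset.univ.filter fun j => x j ≠ x₀ j).erase i := by
    ext j
    simp only [Finset.mem_filter, Finset.mem_univ, true_and, Finset.mem_erase]
    rcases eq_or_ne j i with rfl | hj
    · simp only [Function.update_self]
      constructor
      · intro hne; exact absurd (by cases h0 : x₀ j <;> cases h1 : x j <;> simp_all) hne
      · rintro ⟨hjj, -⟩; exact absurd rfl hjj
    · simp [Function.update_of_ne hj, hj]
  show (Finset.univ.filter fun j => Function.update x i (!x i) j ≠ x₀ j).card = _
  rw [hfi, Finset.card_erase_of_mem (by simp [h])]
  rfl

lemma sum_flip (g : ℕ → ℝ) (x x₀ : Fin n → Bool) :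
    ∑ i : Fin n, (g (hammingDist x x₀) - g (hammingDist (Function.update x i (!x i)) x₀)) ^ 2
      = ((n - hammingDist x x₀ : ℕ) : ℝ) *
          (g (hammingDist x x₀) - g (hammingDist x x₀ + 1)) ^ 2
        + (hammingDist x x₀ : ℝ) * (g (hammingDist x x₀) - g (hammingDist x x₀ - 1)) ^ 2 := by
  rw [← Finset.sum_filter_add_sum_filter_not Finset.univ (fun i => x i = x₀ i)]
  congr 1
  · rw [Finset.sum_congr rfl (fun i hi => by
      rw [dist_update_eq x x₀ i (Finset.mem_filter.1 hi).2]), Finset.sum_const, nsmul_eq_mul]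
    congr 2
    have := Finset.card_filter_add_card_filter_not
      (s := Finset.univ) (p := fun i : Fin n => x i = x₀ i)
    have hd : (Finset.univ.filter fun i : Fin n => ¬ x i = x₀ i).card = hammingDist x x₀ := rfl
    simp only [Finset.card_univ, Fintype.card_fin] at this
    omega
  · rw [Finset.sum_congr rfl (fun i hi => by
      rw [dist_update_ne x x₀ i (Finset.mem_filter.1 hi).2]), Finset.sum_const, nsmul_eq_mul]
    congr 2

lemma fracBoundary_le (n : ℕ) (A : Finset (Fin n → Bool)) (f : (Fin n → Bool) → ℝ)
    (h0 : ∀ x, x ∉ A → f x = 0)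
    (h1 : cubeE n (fun x => f x ^ 2) = (A.card : ℝ) / 2 ^ n) :
    fracBoundary n A ≤ cubeD2 n f := by
  apply csInf_le
  · refine ⟨0, ?_⟩
    rintro v ⟨f', -, -, rfl⟩
    unfold cubeD2 cubeE
    positivity
  · exact ⟨f, h0, h1, rfl⟩

lemma cubeD2_radial (x₀ : Fin n → Bool) (g : ℕ → ℝ) :
    cubeD2 n (fun x => g (hammingDist x x₀)) =
      2 * (∑ k ∈ Finset.range n,
        ((n.choose k * (n - k) : ℕ) : ℝ) * (g k - g (k + 1)) ^ 2) / 2 ^ n := by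
  unfold cubeD2 cubeE
  rw [div_eq_div_iff (by positivity) (by positivity)]
  congr 1
  rw [Finset.sum_congr rfl (fun x _ => sum_flip g x x₀),
    sum_shell x₀ (fun k => ((n - k : ℕ) : ℝ) * (g k - g (k + 1)) ^ 2
        + (k : ℝ) * (g k - g (k - 1)) ^ 2)]
  have step : ∀ k, (n.choose k : ℝ) * (((n - k : ℕ) : ℝ) * (g k - g (k + 1)) ^ 2
        + (k : ℝ) * (g k - g (k - 1)) ^ 2)
      = ((n.choose k * (n - k) : ℕ) : ℝ) * (g k - g (k + 1)) ^ 2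
        + ((n.choose k * k : ℕ) : ℝ) * (g k - g (k - 1)) ^ 2 := by
    intro k; push_cast; ring
  rw [Finset.sum_congr rfl fun k _ => step k, Finset.sum_add_distrib]
  have h1 : ∑ k ∈ Finset.range (n + 1),
      ((n.choose k * (n - k) : ℕ) : ℝ) * (g k - g (k + 1)) ^ 2
      = ∑ k ∈ Finset.range n, ((n.choose k * (n - k) : ℕ) : ℝ) * (g k - g (k + 1)) ^ 2 := by
    rw [Finset.sum_range_succ]; simp
  have h2 : ∑ k ∈ Finset.range (n + 1), ((n.choose k * k : ℕ) : ℝ) * (g k - g (k - 1)) ^ 2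
      = ∑ k ∈ Finset.range n, ((n.choose k * (n - k) : ℕ) : ℝ) * (g k - g (k + 1)) ^ 2 := by
    rw [Finset.sum_range_succ']
    simp only [Nat.mul_zero, Nat.cast_zero, zero_mul, add_zero]
    refine Finset.sum_congr rfl fun k _ => ?_
    have hc : n.choose (k + 1) * (k + 1) = n.choose k * (n - k) := Nat.choose_succ_right_eq n k
    rw [hc]
    congr 1
    rw [Nat.add_sub_cancel]
    ring
  rw [h1, h2]
  ring

lemma H_eq (a : ℝ) : -a * Real.log a - (1 - a) * Real.log (1 - a)
    = Real.negMulLog a + Real.negMulLog (1 - a) := by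
  simp [Real.negMulLog]; ring

lemma H_strictMono :
    StrictMonoOn (fun a : ℝ => -a * Real.log a - (1 - a) * Real.log (1 - a))
      (Set.Icc 0 (1 / 2)) := by
  have hfun : (fun a : ℝ => -a * Real.log a - (1 - a) * Real.log (1 - a))
      = fun a => Real.negMulLog a + Real.negMulLog (1 - a) := funext H_eq
  rw [hfun]
  apply strictMonoOn_of_deriv_pos (convex_Icc _ _)
  · exact (Real.continuous_negMulLog.add
      (Real.continuous_negMulLog.comp (continuous_const.sub continuous_id))).continuousOn
  · intro x hx
    rw [interior_Icc] at hx
    have hx0 : x ≠ 0 := ne_of_gt hx.1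
    have hx1 : (1 : ℝ) - x ≠ 0 := by linarith [hx.2]
    have hd1 : HasDerivAt Real.negMulLog (-Real.log x - 1) x := Real.hasDerivAt_negMulLog hx0
    have hd2 : HasDerivAt (fun a : ℝ => Real.negMulLog (1 - a))
        ((-Real.log (1 - x) - 1) * (-1)) x :=
      (Real.hasDerivAt_negMulLog hx1).comp x ((hasDerivAt_id x).const_sub 1)
    have hd : HasDerivAt (fun a : ℝ => Real.negMulLog a + Real.negMulLog (1 - a))
        ((-Real.log x - 1) + (-Real.log (1 - x) - 1) * (-1)) x := hd1.add hd2
    rw [hd.deriv]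
    have : Real.log x < Real.log (1 - x) := Real.log_lt_log hx.1 (by linarith [hx.2])
    linarith

lemma theta_le_rho {θ ρ y : ℝ} (hθ : θ ∈ Set.Icc (0 : ℝ) (1 / 2))
    (hρ : ρ ∈ Set.Icc (0 : ℝ) (1 / 2))
    (hH : -θ * Real.log θ - (1 - θ) * Real.log (1 - θ) = y)
    (hy : y ≤ -ρ * Real.log ρ - (1 - ρ) * Real.log (1 - ρ)) : θ ≤ ρ := by
  by_contra h
  push_neg at h
  have := H_strictMono hρ hθ h
  simp only at this
  linarith

lemma card_ball (x₀ : Fin n → Bool) (r : ℕ) :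
    (((Finset.univ.filter fun x : Fin n → Bool => hammingDist x x₀ ≤ r).card : ℕ) : ℝ)
      = ∑ k ∈ Finset.range (n + 1), (n.choose k : ℝ) * (if k ≤ r then 1 else 0) := by
  rw [← sum_shell x₀ (fun k => if k ≤ r then (1 : ℝ) else 0), Finset.card_filter]
  push_cast [apply_ite]
  rfl

lemma ball_log_le (x₀ : Fin n → Bool) (r : ℕ) (hn : 0 < n) (h2r : 2 * r ≤ n) :
    Real.log ((Finset.univ.filter fun x : Fin n → Bool => hammingDist x x₀ ≤ r).card) / n
      ≤ -(r / n : ℝ) * Real.log (r / n) - (1 - r / n) * Real.log (1 - r / n) := by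
  have hn' : (0 : ℝ) < n := by exact_mod_cast hn
  set A : ℝ := (((Finset.univ.filter fun x : Fin n → Bool => hammingDist x x₀ ≤ r).card : ℕ) : ℝ)
    with hA
  have hrn : r ≤ n := by omega
  have hρ0 : (0 : ℝ) ≤ r / n := by positivity
  have hρh : (r / n : ℝ) ≤ 1 / 2 := by
    have h2r' : ((2 * r : ℕ) : ℝ) ≤ (n : ℝ) := Nat.cast_le.2 h2r
    push_cast at h2r'
    rw [div_le_div_iff₀ hn' (by norm_num)]
    linarith
  have hρle : (r / n : ℝ) ≤ 1 - r / n := by linarith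
  have hbinom : ∑ k ∈ Finset.range (n + 1),
      (r / n : ℝ) ^ k * (1 - r / n) ^ (n - k) * n.choose k = 1 := by
    rw [← add_pow]
    norm_num
  have hkey : A * ((r / n : ℝ) ^ r * (1 - r / n) ^ (n - r)) ≤ ∑ k ∈ Finset.range (n + 1),
      (r / n : ℝ) ^ k * (1 - r / n) ^ (n - k) * n.choose k := by
    rw [hA, card_ball x₀ r, Finset.sum_mul]
    apply Finset.sum_le_sum
    intro k hk
    by_cases hkr : k ≤ r
    · simp only [hkr, if_true, mul_one]
      have hsplit : (r / n : ℝ) ^ r = (r / n : ℝ) ^ k * (r / n : ℝ) ^ (r - k) := by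
        rw [← pow_add]; congr 1; omega
      have hsplit2 : (1 - r / n : ℝ) ^ (n - k)
          = (1 - r / n : ℝ) ^ (n - r) * (1 - r / n : ℝ) ^ (r - k) := by
        rw [← pow_add]; congr 1; omega
      have hple : (r / n : ℝ) ^ (r - k) ≤ (1 - r / n : ℝ) ^ (r - k) :=
        pow_le_pow_left₀ hρ0 hρle _
      have h1 : (0 : ℝ) ≤ (r / n : ℝ) ^ k := by positivity
      have h2 : (0 : ℝ) ≤ (1 - r / n : ℝ) ^ (n - r) := pow_nonneg (by linarith) _
      calc (n.choose k : ℝ) * ((r / n : ℝ) ^ r * (1 - r / n) ^ (n - r))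
          = (r / n : ℝ) ^ k * ((r / n : ℝ) ^ (r - k) * (1 - r / n) ^ (n - r)) * n.choose k := by
            rw [hsplit]; ring
        _ ≤ (r / n : ℝ) ^ k * ((1 - r / n : ℝ) ^ (r - k) * (1 - r / n) ^ (n - r)) * n.choose k := by
            have : (0 : ℝ) ≤ (n.choose k : ℝ) := by positivity
            apply mul_le_mul_of_nonneg_right _ this
            apply mul_le_mul_of_nonneg_left _ h1
            exact mul_le_mul_of_nonneg_right hple h2
        _ = (r / n : ℝ) ^ k * (1 - r / n) ^ (n - k) * n.choose k := by
            rw [hsplit2]; ring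
    · simp only [hkr, if_false, mul_zero, zero_mul]
      exact mul_nonneg (mul_nonneg (pow_nonneg hρ0 _) (pow_nonneg (by linarith) _))
        (by positivity)
  rw [hbinom] at hkey
  have hA1 : (1 : ℝ) ≤ A := by
    rw [hA]
    have : x₀ ∈ Finset.univ.filter fun x : Fin n → Bool => hammingDist x x₀ ≤ r := by
      simp [hammingDist_self]
    exact_mod_cast Finset.card_pos.2 ⟨x₀, this⟩
  have hpowr : (0 : ℝ) < (r / n : ℝ) ^ r := by
    rcases Nat.eq_zero_or_pos r with rfl | hr
    · simp
    · have : (0 : ℝ) < r / n := by positivity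
      positivity
  have hpow1 : (0 : ℝ) < (1 - r / n : ℝ) ^ (n - r) := by
    have : (0 : ℝ) < 1 - r / n := by linarith
    positivity
  have hAle : A ≤ 1 / ((r / n : ℝ) ^ r * (1 - r / n) ^ (n - r)) := by
    rw [le_div_iff₀ (by positivity)]
    exact hkey
  have hlog : Real.log A ≤ -(r * Real.log (r / n)) - (n - r : ℝ) * Real.log (1 - r / n) := by
    calc Real.log A ≤ Real.log (1 / ((r / n : ℝ) ^ r * (1 - r / n) ^ (n - r))) :=
          Real.log_le_log (by linarith) hAle
      _ = -(r * Real.log (r / n)) - (n - r : ℝ) * Real.log (1 - r / n) := by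
          rw [one_div, Real.log_inv, Real.log_mul (by positivity) (by positivity),
            Real.log_pow, Real.log_pow, Nat.cast_sub hrn]
          ring
  rw [div_le_iff₀ hn']
  calc Real.log A ≤ -(r * Real.log (r / n)) - (n - r : ℝ) * Real.log (1 - r / n) := hlog
    _ = (-(r / n : ℝ) * Real.log (r / n) - (1 - r / n) * Real.log (1 - r / n)) * n := by
        field_simp

lemma expand_term {C D a b c : ℝ} (hC : 0 < C) (hD : 0 < D) (ha : 0 ≤ a) (hb : 0 ≤ b)
    (hid : C * a = D * b) :
    C * a * (c / Real.sqrt C - c / Real.sqrt D) ^ 2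
      = c ^ 2 * (a + b - 2 * Real.sqrt (a * b)) := by
  have hsC : 0 < Real.sqrt C := Real.sqrt_pos.2 hC
  have hsD : 0 < Real.sqrt D := Real.sqrt_pos.2 hD
  have e1 : (c / Real.sqrt C - c / Real.sqrt D) ^ 2
      = c ^ 2 / C - 2 * (c ^ 2 / (Real.sqrt C * Real.sqrt D)) + c ^ 2 / D := by
    rw [sub_sq, div_pow, div_pow, Real.sq_sqrt hC.le, Real.sq_sqrt hD.le]
    ring
  have e2 : C * a / (Real.sqrt C * Real.sqrt D) = Real.sqrt (a * b) := by
    rw [← Real.sqrt_mul hC.le D]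
    have hCa : 0 ≤ C * a := mul_nonneg hC.le ha
    have e3 : a * b = (C * a) ^ 2 / (C * D) := by
      rw [sq]
      nth_rewrite 2 [hid]
      field_simp
    rw [e3, Real.sqrt_div (sq_nonneg (C*a)) (C*D), Real.sqrt_sq hCa]
  have hbeq : C * a / D = b := by field_simp [hid]; exact hid
  calc C * a * (c / Real.sqrt C - c / Real.sqrt D) ^ 2
      = a * c ^ 2 + (C * a / D) * c ^ 2 - 2 * c ^ 2 * (C * a / (Real.sqrt C * Real.sqrt D)) := by
        rw [e1]; field_simp; ring
    _ = c ^ 2 * (a + b - 2 * Real.sqrt (a * b)) := by rw [hbeq, e2]; ring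

lemma stepA_lemma {n r θ : ℝ} (hn : 0 < n) (hθθ : θ * (1 - θ) ≤ (r / n) * (1 - r / n)) :
    n ^ 2 * (θ * (1 - θ)) ≤ r * (n - r) := by
  have hid : n ^ 2 * ((r / n) * (1 - r / n)) = r * (n - r) := by field_simp
  nlinarith [mul_le_mul_of_nonneg_left hθθ (sq_nonneg n), hid]

lemma stepB_lemma {sr sm mr rr : ℝ} (hsr1 : 1 ≤ sr) (hsm0 : 0 ≤ sm) (hsmsr : sm ≤ sr)
    (hsr2 : sr ^ 2 = rr) (hsm2 : sm ^ 2 = rr - mr + 1) : sr - sm ≤ mr := by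
  nlinarith [mul_le_mul_of_nonneg_right hsmsr hsm0,
    mul_nonneg (sub_nonneg.2 hsr1) (sub_nonneg.2 hsmsr)]

lemma stepD_lemma {n r m : ℝ} (h1 : 0 ≤ n - r) (h2 : 0 ≤ r - m + 1) (h3 : 2 * r ≤ n)
    (h4 : 1 ≤ m) : (n - r) * (r - m + 1) ≤ (n / 2) ^ 2 := by
  nlinarith [sq_nonneg (n - 2 * r), mul_nonneg h1 (by linarith : (0 : ℝ) ≤ m - 1)]

lemma assemble_lemma {n m ε s sθ sn : ℝ} (hn : 0 ≤ n) (hs0 : 0 ≤ s) (hm0 : 0 ≤ m)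
    (hchain : n * sθ ≤ s + sn * m) (hC : m ^ 2 * sn ≤ n) (hD : s ≤ n / 2)
    (hmε : 2 ≤ ε * m) : n * m * sθ ≤ (m - 1) * s + n * m * ε := by
  nlinarith [mul_le_mul_of_nonneg_left hchain hm0, hC, hD, hs0,
    mul_nonneg hn (by linarith : (0 : ℝ) ≤ ε * m - 2)]

lemma concl_lemma {n m ε s sθ c2 : ℝ} (hc2 : 0 ≤ c2)
    (hkey : n * m * sθ ≤ (m - 1) * s + n * m * ε) :
    2 * (c2 * (n * m - 2 * (m - 1) * s)) ≤ 4 * n * (1 / 2 - sθ + ε) * (m * c2) := by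
  nlinarith [mul_le_mul_of_nonneg_left hkey hc2]


/-- **Fractional edge-boundary of Hamming balls (upper bound)** -/
theorem fracBoundary_ball_upper_bound
    (Hinv : ℝ → ℝ)
    (hHinv : ∀ y ∈ Set.Icc (0 : ℝ) (Real.log 2),
      Hinv y ∈ Set.Icc (0 : ℝ) (1 / 2) ∧
        -(Hinv y) * Real.log (Hinv y) - (1 - Hinv y) * Real.log (1 - Hinv y) = y) :
    ∀ ε > (0 : ℝ), ∃ N : ℕ, ∀ n ≥ N, ∀ B : Finset (Fin n → Bool),
      (∃ (x₀ : Fin n → Bool) (r : ℕ), (r : ℝ) ≤ n / 2 ∧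
          B = Finset.univ.filter fun x => hammingDist x x₀ ≤ r) →
      fracBoundary n B ≤
        4 * n *
          (1 / 2 -
            Real.sqrt (Hinv (Real.log B.card / n) * (1 - Hinv (Real.log B.card / n)))
            + ε) *
          ((B.card : ℝ) / 2 ^ n) := by
  intro ε hε
  set m : ℕ := ⌈(2 : ℝ) / ε⌉₊ with hm
  have hm1 : 1 ≤ m := Nat.one_le_iff_ne_zero.2 (by
    simp only [hm, ne_eq, Nat.ceil_eq_zero, not_le]
    positivity)
  have hmε : 2 ≤ ε * m := by
    have := Nat.le_ceil ((2 : ℝ) / ε)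
    rw [div_le_iff₀ hε] at this
    linarith [this]
  refine ⟨m ^ 4 + ⌈(m : ℝ) / ε ^ 2⌉₊ + 1, ?_⟩
  intro n hn B hBex
  obtain ⟨x₀, r, hr2, hBdef⟩ := hBex
  have hn1 : 1 ≤ n := by omega
  have hnm4 : m ^ 4 ≤ n := by omega
  have hn' : (0 : ℝ) < n := by exact_mod_cast hn1
  have hnme : (m : ℝ) / ε ^ 2 ≤ n := by
    calc (m : ℝ) / ε ^ 2 ≤ ⌈(m : ℝ) / ε ^ 2⌉₊ := Nat.le_ceil _
      _ ≤ n := by exact_mod_cast (by omega : ⌈(m : ℝ) / ε ^ 2⌉₊ ≤ n)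
  have h2r : 2 * r ≤ n := by
    have : 2 * (r : ℝ) ≤ n := by linarith [hr2]
    exact_mod_cast this
  have hrn : r ≤ n := by omega
  have hrltn : r < n := by omega
  have h2n : (0 : ℝ) < 2 ^ n := by positivity
  -- ball cardinality facts
  have hB1 : 1 ≤ B.card := by
    rw [hBdef]
    refine Finset.card_pos.2 ⟨x₀, ?_⟩
    simp [hammingDist_self]
  have hB1' : (1 : ℝ) ≤ B.card := by exact_mod_cast hB1
  have hBle : B.card ≤ 2 ^ n := by
    calc B.card ≤ (Finset.univ : Finset (Fin n → Bool)).card := by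
          rw [hBdef]; exact Finset.card_filter_le _ _
      _ = 2 ^ n := by simp
  set y : ℝ := Real.log B.card / n with hy
  have hymem : y ∈ Set.Icc (0 : ℝ) (Real.log 2) := by
    constructor
    · exact div_nonneg (Real.log_nonneg hB1') hn'.le
    · rw [hy, div_le_iff₀ hn']
      calc Real.log B.card ≤ Real.log ((2 : ℝ) ^ n) :=
            Real.log_le_log (by linarith) (by exact_mod_cast hBle)
        _ = n * Real.log 2 := by rw [Real.log_pow]
        _ = Real.log 2 * n := by ring
  obtain ⟨hθmem, hθH⟩ := hHinv y hymem
  set θ : ℝ := Hinv y with hθ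
  have hθ0 : 0 ≤ θ := hθmem.1
  have hθh : θ ≤ 1 / 2 := hθmem.2
  have hρmem : (r / n : ℝ) ∈ Set.Icc (0 : ℝ) (1 / 2) := by
    constructor
    · positivity
    · rw [div_le_div_iff₀ hn' (by norm_num)]
      have : ((2 * r : ℕ) : ℝ) ≤ n := by exact_mod_cast h2r
      push_cast at this
      linarith
  have hθρ : θ ≤ (r : ℝ) / n := by
    refine theta_le_rho hθmem hρmem hθH ?_
    have := ball_log_le x₀ r (by omega) h2r
    rw [hy, hBdef]
    exact this
  have hθθ : θ * (1 - θ) ≤ ((r : ℝ) / n) * (1 - (r : ℝ) / n) := by nlinarith [hρmem.2]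
  have hsθ0 : 0 ≤ Real.sqrt (θ * (1 - θ)) := Real.sqrt_nonneg _
  by_cases hcase : r < m
  · -- small radius: indicator function
    set g : ℕ → ℝ := fun k => if k ≤ r then (1 : ℝ) else 0 with hg
    have h0 : ∀ x, x ∉ B → (fun x => g (hammingDist x x₀)) x = 0 := by
      intro x hx
      rw [hBdef] at hx
      simp only [Finset.mem_filter, Finset.mem_univ, true_and, not_le] at hx
      simp only [hg]
      rw [if_neg (by omega)]
    have h1 : cubeE n (fun x => (g (hammingDist x x₀)) ^ 2) = (B.card : ℝ) / 2 ^ n := by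
      unfold cubeE
      congr 1
      have hgx : ∀ x : Fin n → Bool, (g (hammingDist x x₀)) ^ 2
          = if hammingDist x x₀ ≤ r then (1 : ℝ) else 0 := by
        intro x
        simp only [hg]
        split_ifs <;> norm_num
      rw [Finset.sum_congr rfl fun x _ => hgx x, Finset.sum_boole, hBdef]
    have hfb := fracBoundary_le n B (fun x => g (hammingDist x x₀)) h0 h1
    refine hfb.trans ?_
    rw [cubeD2_radial x₀ g]
    -- compute the edge sum: only k = r contributes
    have hsum : ∑ k ∈ Finset.range n, ((n.choose k * (n - k) : ℕ) : ℝ) * (g k - g (k + 1)) ^ 2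
        = ((n.choose r * (n - r) : ℕ) : ℝ) := by
      rw [Finset.sum_eq_single_of_mem r (Finset.mem_range.2 hrltn)]
      · simp only [hg]
        rw [if_pos le_rfl, if_neg (by omega)]
        norm_num
      · intro b _ hbr
        have : g b = g (b + 1) := by
          simp only [hg]
          split_ifs with hb1 hb2 <;> first | rfl | omega
        rw [this]
        simp
    rw [hsum]
    -- bound the choose term by n * B.card
    have hCb : (n.choose r : ℝ) ≤ B.card := by
      rw [hBdef, card_ball x₀ r]
      have hmem : r ∈ Finset.range (n + 1) := Finset.mem_range.2 (by omega)
      calc (n.choose r : ℝ) = (n.choose r : ℝ) * (if r ≤ r then (1:ℝ) else 0) := by simp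
        _ ≤ ∑ k ∈ Finset.range (n + 1), (n.choose k : ℝ) * (if k ≤ r then 1 else 0) := by
            refine Finset.single_le_sum
              (f := fun k => (n.choose k : ℝ) * (if k ≤ r then (1:ℝ) else 0))
              (fun k _ => ?_) hmem
            refine mul_nonneg (by positivity) ?_
            split_ifs <;> norm_num
    have hsε : Real.sqrt (θ * (1 - θ)) ≤ ε := by
      have hθm : θ * (1 - θ) ≤ ε ^ 2 := by
        have h1' : θ * (1 - θ) ≤ θ := by nlinarith
        have h2' : (r : ℝ) / n ≤ (m : ℝ) / n := by
          gcongr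
        have h3' : (m : ℝ) / n ≤ ε ^ 2 := by
          rw [div_le_iff₀ hn']
          rw [div_le_iff₀ (by positivity : (0:ℝ) < ε ^ 2)] at hnme
          nlinarith [hnme]
        linarith
      calc Real.sqrt (θ * (1 - θ)) ≤ Real.sqrt (ε ^ 2) := Real.sqrt_le_sqrt hθm
        _ = ε := Real.sqrt_sq hε.le
    -- final comparison
    have hX : ((n.choose r * (n - r) : ℕ) : ℝ) ≤ (n : ℝ) * B.card := by
      have hnr : ((n - r : ℕ) : ℝ) ≤ (n : ℝ) := by exact_mod_cast Nat.sub_le n r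
      have hXc : ((n.choose r * (n - r) : ℕ) : ℝ)
          = (n.choose r : ℝ) * ((n - r : ℕ) : ℝ) := by push_cast; ring
      rw [hXc]
      calc (n.choose r : ℝ) * ((n - r : ℕ) : ℝ)
          ≤ (B.card : ℝ) * ((n - r : ℕ) : ℝ) :=
            mul_le_mul_of_nonneg_right hCb (by positivity)
        _ ≤ (B.card : ℝ) * (n : ℝ) := mul_le_mul_of_nonneg_left hnr (by positivity)
        _ = (n : ℝ) * B.card := by ring
    calc 2 * ((n.choose r * (n - r) : ℕ) : ℝ) / 2 ^ n ≤ 2 * ((n : ℝ) * B.card) / 2 ^ n :=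
          (div_le_div_iff_of_pos_right h2n).2 (by linarith)
      _ = (2 * n) * ((B.card : ℝ) / 2 ^ n) := by ring
      _ ≤ (4 * n * (1 / 2 - Real.sqrt (θ * (1 - θ)) + ε)) * ((B.card : ℝ) / 2 ^ n) := by
          refine mul_le_mul_of_nonneg_right ?_ (by positivity)
          nlinarith [mul_nonneg hn'.le (sub_nonneg.2 hsε)]
      _ = 4 * n * (1 / 2 - Real.sqrt (θ * (1 - θ)) + ε) * ((B.card : ℝ) / 2 ^ n) := by ring
  · -- large radius: smoothed window function
    push_neg at hcase
    have hr1 : 1 ≤ r := le_trans hm1 hcase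
    set W : Finset ℕ := Finset.Icc (r - m + 1) r with hW
    set c : ℝ := Real.sqrt ((B.card : ℝ) / m) with hc
    have hm0 : (0 : ℝ) < m := by exact_mod_cast hm1
    have hc2 : c ^ 2 = (B.card : ℝ) / m := Real.sq_sqrt (by positivity)
    set g : ℕ → ℝ := fun k => if k ∈ W then c / Real.sqrt (n.choose k) else 0 with hg
    have hgz : ∀ k, k ∉ W → g k = 0 := by
      intro k hk; simp only [hg]; rw [if_neg hk]
    have hgm : ∀ k, k ∈ W → g k = c / Real.sqrt (n.choose k) := by
      intro k hk; simp only [hg]; rw [if_pos hk]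
    have hCpos : ∀ k, k ≤ n → (0 : ℝ) < n.choose k := by
      intro k hk; exact_mod_cast Nat.choose_pos hk
    have hcnr : ((n - r : ℕ) : ℝ) = (n : ℝ) - r := Nat.cast_sub hrn
    have hcrm : ((r - m : ℕ) : ℝ) = (r : ℝ) - m := Nat.cast_sub hcase
    have hcm1 : ((m - 1 : ℕ) : ℝ) = (m : ℝ) - 1 := by
      rw [Nat.cast_sub hm1]; norm_num
    -- support
    have h0 : ∀ x, x ∉ B → (fun x => g (hammingDist x x₀)) x = 0 := by
      intro x hx
      rw [hBdef] at hx
      simp only [Finset.mem_filter, Finset.mem_univ, true_and, not_le] at hx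
      exact hgz _ (by rw [hW, Finset.mem_Icc]; omega)
    -- normalization
    have h1 : cubeE n (fun x => (g (hammingDist x x₀)) ^ 2) = (B.card : ℝ) / 2 ^ n := by
      unfold cubeE
      congr 1
      have hWsub : W ⊆ Finset.range (n + 1) := by
        intro k hk; rw [hW, Finset.mem_Icc] at hk; rw [Finset.mem_range]; omega
      calc ∑ x : Fin n → Bool, (g (hammingDist x x₀)) ^ 2
          = ∑ k ∈ Finset.range (n + 1), (n.choose k : ℝ) * (g k) ^ 2 :=
            sum_shell x₀ (fun k => (g k) ^ 2)
        _ = ∑ k ∈ W, (n.choose k : ℝ) * (g k) ^ 2 :=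
            (Finset.sum_subset hWsub (fun k _ hkW => by rw [hgz k hkW]; ring)).symm
        _ = ∑ k ∈ W, c ^ 2 := by
            refine Finset.sum_congr rfl fun k hk => ?_
            have hkn : k ≤ n := by rw [hW, Finset.mem_Icc] at hk; omega
            have hCk := hCpos k hkn
            rw [hgm k hk, div_pow, Real.sq_sqrt hCk.le]
            field_simp
        _ = (B.card : ℝ) := by
            rw [Finset.sum_const, nsmul_eq_mul]
            have hWcard : W.card = m := by rw [hW, Nat.card_Icc]; omega
            rw [hWcard, hc2]
            field_simp
    refine (fracBoundary_le n B _ h0 h1).trans ?_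
    rw [cubeD2_radial x₀ g]
    set s : ℝ := Real.sqrt (((n - r) * (r - m + 1) : ℕ) : ℝ) with hs
    have hs0 : 0 ≤ s := Real.sqrt_nonneg _
    -- bound the edge sum
    have hSbound : ∑ k ∈ Finset.range n,
        ((n.choose k * (n - k) : ℕ) : ℝ) * (g k - g (k + 1)) ^ 2
        ≤ c ^ 2 * ((n : ℝ) * m - 2 * ((m : ℝ) - 1) * s) := by
      have hsub2 : Finset.Icc (r - m) r ⊆ Finset.range n := by
        intro k hk; rw [Finset.mem_Icc] at hk; rw [Finset.mem_range]; omega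
      have hzero : ∀ k ∈ Finset.range n, k ∉ Finset.Icc (r - m) r →
          ((n.choose k * (n - k) : ℕ) : ℝ) * (g k - g (k + 1)) ^ 2 = 0 := by
        intro k _ hk
        rw [Finset.mem_Icc] at hk
        have hk1 : g k = 0 := hgz k (by rw [hW, Finset.mem_Icc]; omega)
        have hk2 : g (k + 1) = 0 := hgz _ (by rw [hW, Finset.mem_Icc]; omega)
        rw [hk1, hk2]; ring
      rw [← Finset.sum_subset hsub2 hzero]
      have hins1 : Finset.Icc (r - m) r = insert (r - m) (Finset.Icc (r - m + 1) r) := by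
        ext k; simp only [Finset.mem_Icc, Finset.mem_insert]; omega
      have hins2 : Finset.Icc (r - m + 1) r = insert r (Finset.Icc (r - m + 1) (r - 1)) := by
        ext k; simp only [Finset.mem_Icc, Finset.mem_insert]; omega
      rw [hins1, Finset.sum_insert (by rw [Finset.mem_Icc]; omega), hins2,
        Finset.sum_insert (by rw [Finset.mem_Icc]; omega)]
      -- term at r - m
      have hT1 : ((n.choose (r - m) * (n - (r - m)) : ℕ) : ℝ)
          * (g (r - m) - g (r - m + 1)) ^ 2 = ((r - m + 1 : ℕ) : ℝ) * c ^ 2 := by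
        have hg1 : g (r - m) = 0 := hgz _ (by rw [hW, Finset.mem_Icc]; omega)
        have hg2 : g (r - m + 1) = c / Real.sqrt (n.choose (r - m + 1)) :=
          hgm _ (by rw [hW, Finset.mem_Icc]; omega)
        have hCid : (n.choose (r - m) * (n - (r - m)) : ℕ)
            = n.choose (r - m + 1) * (r - m + 1) := (Nat.choose_succ_right_eq n (r - m)).symm
        have hCp : (0 : ℝ) < n.choose (r - m + 1) := hCpos _ (by omega)
        rw [hg1, hg2, hCid]
        push_cast
        rw [zero_sub, neg_sq, div_pow, Real.sq_sqrt hCp.le]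
        field_simp
      -- term at r
      have hT2 : ((n.choose r * (n - r) : ℕ) : ℝ) * (g r - g (r + 1)) ^ 2
          = ((n - r : ℕ) : ℝ) * c ^ 2 := by
        have hg1 : g r = c / Real.sqrt (n.choose r) := hgm _ (by rw [hW, Finset.mem_Icc]; omega)
        have hg2 : g (r + 1) = 0 := hgz _ (by rw [hW, Finset.mem_Icc]; omega)
        have hCp : (0 : ℝ) < n.choose r := hCpos _ hrn
        rw [hg1, hg2]
        push_cast
        rw [sub_zero, div_pow, Real.sq_sqrt hCp.le]
        field_simp
      -- middle terms
      have hT3 : ∑ k ∈ Finset.Icc (r - m + 1) (r - 1),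
          ((n.choose k * (n - k) : ℕ) : ℝ) * (g k - g (k + 1)) ^ 2
          ≤ ((m : ℝ) - 1) * (c ^ 2 * (((n : ℝ) + 1) - 2 * s)) := by
        have hcard : (Finset.Icc (r - m + 1) (r - 1)).card = m - 1 := by
          rw [Nat.card_Icc]; omega
        have hbd : ∀ k ∈ Finset.Icc (r - m + 1) (r - 1),
            ((n.choose k * (n - k) : ℕ) : ℝ) * (g k - g (k + 1)) ^ 2
            ≤ c ^ 2 * (((n : ℝ) + 1) - 2 * s) := by
          intro k hk
          rw [Finset.mem_Icc] at hk
          have hkn : k ≤ n := by omega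
          have hk1n : k + 1 ≤ n := by omega
          have e0 : g k = c / Real.sqrt (n.choose k) :=
            hgm _ (by rw [hW, Finset.mem_Icc]; omega)
          have e1 : g (k + 1) = c / Real.sqrt (n.choose (k + 1)) :=
            hgm _ (by rw [hW, Finset.mem_Icc]; omega)
          have hid : (n.choose k : ℝ) * ((n - k : ℕ) : ℝ)
              = (n.choose (k + 1) : ℝ) * ((k + 1 : ℕ) : ℝ) := by
            exact_mod_cast congrArg (Nat.cast (R := ℝ)) (Nat.choose_succ_right_eq n k).symm
          have hexp := expand_term (c := c) (hCpos k hkn) (hCpos (k + 1) hk1n)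
            (by positivity) (by positivity) hid
          calc ((n.choose k * (n - k) : ℕ) : ℝ) * (g k - g (k + 1)) ^ 2
              = (n.choose k : ℝ) * ((n - k : ℕ) : ℝ)
                * (c / Real.sqrt (n.choose k) - c / Real.sqrt (n.choose (k + 1))) ^ 2 := by
                rw [e0, e1]; push_cast; ring
            _ = c ^ 2 * (((n - k : ℕ) : ℝ) + ((k + 1 : ℕ) : ℝ)
                - 2 * Real.sqrt (((n - k : ℕ) : ℝ) * ((k + 1 : ℕ) : ℝ))) := hexp
            _ ≤ c ^ 2 * (((n : ℝ) + 1) - 2 * s) := by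
                have hab : ((n - k : ℕ) : ℝ) + ((k + 1 : ℕ) : ℝ) ≤ (n : ℝ) + 1 := by
                  have : (n - k) + (k + 1) ≤ n + 1 := by omega
                  exact_mod_cast this
                have hsle : s ≤ Real.sqrt (((n - k : ℕ) : ℝ) * ((k + 1 : ℕ) : ℝ)) := by
                  rw [hs]
                  apply Real.sqrt_le_sqrt
                  have : (n - r) * (r - m + 1) ≤ (n - k) * (k + 1) :=
                    Nat.mul_le_mul (by omega) (by omega)
                  exact_mod_cast this
                have hsub' : (((n - k : ℕ) : ℝ) + ((k + 1 : ℕ) : ℝ)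
                    - 2 * Real.sqrt (((n - k : ℕ) : ℝ) * ((k + 1 : ℕ) : ℝ)))
                    ≤ (((n : ℝ) + 1) - 2 * s) := by linarith only [hab, hsle]
                exact mul_le_mul_of_nonneg_left hsub' (sq_nonneg c)
        calc ∑ k ∈ Finset.Icc (r - m + 1) (r - 1),
            ((n.choose k * (n - k) : ℕ) : ℝ) * (g k - g (k + 1)) ^ 2
            ≤ (Finset.Icc (r - m + 1) (r - 1)).card • (c ^ 2 * (((n : ℝ) + 1) - 2 * s)) :=
              Finset.sum_le_card_nsmul _ _ _ hbd
          _ = ((m : ℝ) - 1) * (c ^ 2 * (((n : ℝ) + 1) - 2 * s)) := by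
              rw [hcard, nsmul_eq_mul, hcm1]
      -- combine the three pieces
      have hcrm1 : ((r - m + 1 : ℕ) : ℝ) = (r : ℝ) - m + 1 := by
        push_cast [hcrm]; ring
      calc ((n.choose (r - m) * (n - (r - m)) : ℕ) : ℝ) * (g (r - m) - g (r - m + 1)) ^ 2
            + (((n.choose r * (n - r) : ℕ) : ℝ) * (g r - g (r + 1)) ^ 2
              + ∑ k ∈ Finset.Icc (r - m + 1) (r - 1),
                  ((n.choose k * (n - k) : ℕ) : ℝ) * (g k - g (k + 1)) ^ 2)
          ≤ ((r - m + 1 : ℕ) : ℝ) * c ^ 2 + (((n - r : ℕ) : ℝ) * c ^ 2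
              + ((m : ℝ) - 1) * (c ^ 2 * (((n : ℝ) + 1) - 2 * s))) := by
            rw [hT1, hT2]
            linarith only [hT3]
        _ = c ^ 2 * ((n : ℝ) * m - 2 * ((m : ℝ) - 1) * s) := by
            rw [hcrm1, hcnr]
            ring
    -- final scalar inequality
    set sθ : ℝ := Real.sqrt (θ * (1 - θ)) with hsθ
    have hkey : (n : ℝ) * m * sθ ≤ ((m : ℝ) - 1) * s + (n : ℝ) * m * ε := by
      set sn : ℝ := Real.sqrt n with hsn
      set sr : ℝ := Real.sqrt r with hsr
      set sq' : ℝ := Real.sqrt ((n : ℝ) - r) with hsq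
      set sm' : ℝ := Real.sqrt ((r : ℝ) - m + 1) with hsm
      have hnr0 : (0 : ℝ) ≤ (n : ℝ) - r := by
        have h := (Nat.cast_le (α := ℝ)).2 hrn; linarith only [h]
      have hrm0 : (0 : ℝ) ≤ (r : ℝ) - m + 1 := by
        have h := (Nat.cast_le (α := ℝ)).2 hcase; linarith only [h]
      have hsfact : s = sq' * sm' := by
        rw [hs, hsq, hsm, ← Real.sqrt_mul hnr0]
        congr 1
        push_cast [Nat.cast_sub hrn, Nat.cast_sub hcase]
        ring
      have hsrsq : sr ^ 2 = r := Real.sq_sqrt (by positivity)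
      have hsmsq : sm' ^ 2 = (r : ℝ) - m + 1 := Real.sq_sqrt hrm0
      have hm1' : (1 : ℝ) ≤ (m : ℝ) := by exact_mod_cast hm1
      have hsr1 : 1 ≤ sr := by
        rw [hsr]
        have h := Real.sqrt_le_sqrt (show (1 : ℝ) ≤ (r : ℝ) by exact_mod_cast hr1)
        rwa [Real.sqrt_one] at h
      have hsmsr : sm' ≤ sr := by
        rw [hsm, hsr]
        apply Real.sqrt_le_sqrt
        linarith only [hm1']
      have hsqsn : sq' ≤ sn := by
        rw [hsq, hsn]
        apply Real.sqrt_le_sqrt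
        have hr0' : (0 : ℝ) ≤ (r : ℝ) := by positivity
        linarith only [hr0']
      have hsm0 : 0 ≤ sm' := Real.sqrt_nonneg _
      have hsq0 : 0 ≤ sq' := Real.sqrt_nonneg _
      have hsn0 : 0 ≤ sn := Real.sqrt_nonneg _
      -- step A : n * sθ ≤ sr * sq'
      have hA : (n : ℝ) * sθ ≤ sr * sq' := by
        have h1' : (n : ℝ) * sθ = Real.sqrt ((n : ℝ) ^ 2 * (θ * (1 - θ))) := by
          rw [Real.sqrt_mul (by positivity), Real.sqrt_sq hn'.le, hsθ]
        have h2' : sr * sq' = Real.sqrt ((r : ℝ) * ((n : ℝ) - r)) := by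
          rw [hsr, hsq, ← Real.sqrt_mul (by positivity)]
        have h3' : (n : ℝ) ^ 2 * (θ * (1 - θ)) ≤ (r : ℝ) * ((n : ℝ) - r) :=
          stepA_lemma hn' hθθ
        rw [h1', h2']
        exact Real.sqrt_le_sqrt h3'
      -- step B : sr - sm' ≤ m
      have hB : sr - sm' ≤ (m : ℝ) :=
        stepB_lemma hsr1 hsm0 hsmsr hsrsq hsmsq
      -- step C : m^2 * sn ≤ n
      have hC : (m : ℝ) ^ 2 * sn ≤ n := by
        have hm2sn : (m : ℝ) ^ 2 ≤ sn := by
          rw [hsn, show ((m : ℝ) ^ 2) = Real.sqrt (((m : ℝ) ^ 2) ^ 2) from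
            (Real.sqrt_sq (by positivity)).symm]
          apply Real.sqrt_le_sqrt
          have h4 : ((m : ℝ) ^ 2) ^ 2 = ((m ^ 4 : ℕ) : ℝ) := by push_cast; ring
          rw [h4]
          exact_mod_cast hnm4
        calc (m : ℝ) ^ 2 * sn ≤ sn * sn := mul_le_mul_of_nonneg_right hm2sn hsn0
          _ = n := by rw [hsn]; exact Real.mul_self_sqrt hn'.le
      -- step D : s ≤ n / 2
      have hD : s ≤ (n : ℝ) / 2 := by
        rw [hs]
        have hcast : (((n - r) * (r - m + 1) : ℕ) : ℝ)
            = ((n : ℝ) - r) * ((r : ℝ) - m + 1) := by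
          push_cast [Nat.cast_sub hrn, Nat.cast_sub hcase]; ring
        rw [hcast, show ((n : ℝ) / 2) = Real.sqrt (((n : ℝ) / 2) ^ 2) from
          (Real.sqrt_sq (by positivity)).symm]
        apply Real.sqrt_le_sqrt
        have h2r' : 2 * (r : ℝ) ≤ n := by exact_mod_cast h2r
        have hm1'' : (1 : ℝ) ≤ m := by exact_mod_cast hm1
        exact stepD_lemma hnr0 hrm0 h2r' hm1''
      -- assemble
      have hchain : (n : ℝ) * sθ ≤ s + sn * m := by
        have hstep : sq' * (sr - sm') ≤ sn * m :=
          mul_le_mul hsqsn hB (sub_nonneg.2 hsmsr) hsn0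
        calc (n : ℝ) * sθ ≤ sr * sq' := hA
          _ = sq' * sm' + sq' * (sr - sm') := by ring
          _ ≤ sq' * sm' + sn * m := by linarith only [hstep]
          _ = s + sn * m := by rw [hsfact]
      exact assemble_lemma hn'.le hs0 hm0.le hchain hC hD hmε
    -- conclude
    have hBc : (B.card : ℝ) = (m : ℝ) * c ^ 2 := by
      rw [hc2]; field_simp
    calc 2 * (∑ k ∈ Finset.range n,
          ((n.choose k * (n - k) : ℕ) : ℝ) * (g k - g (k + 1)) ^ 2) / 2 ^ n
        ≤ 2 * (c ^ 2 * ((n : ℝ) * m - 2 * ((m : ℝ) - 1) * s)) / 2 ^ n :=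
          (div_le_div_iff_of_pos_right h2n).2 (by linarith only [hSbound])
      _ ≤ (4 * n * (1 / 2 - sθ + ε) * ((m : ℝ) * c ^ 2)) / 2 ^ n := by
          apply (div_le_div_iff_of_pos_right h2n).2
          exact concl_lemma (sq_nonneg c) hkey
      _ = 4 * n * (1 / 2 - sθ + ε) * ((B.card : ℝ) / 2 ^ n) := by
          rw [hBc]; ring
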